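/- Let λ, a ∈ ℂ with a ≠ 0, 0 < |λ| < 1, λ^n ∉ ℝ for all integers n > 0, and u_m ≠ 0 for all m ∈ ℕ. Let (r_n)_{n≥0} be a sequence of positive integers such that {r_n·θ} = ‖r_n·θ‖ < 1/4 for all n and ‖r_n·θ‖ → 0 as n → ∞. For each n let Δ_n := { m ∈ ℕ : w_{n,m} ≠ 0 }. Then min Δ_n → ∞ as n → ∞; that is, for every M ∈ ℕ there exists N such that for all n ≥ N, every m ∈ Δ_n satisfies m > M. -/

import Mathlib

/-- Sign lemma: if `A + pB + qC = 0` with `p < 0 < q` and `A, C` of the same sign,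
then `|A| + p|B| + q|C| = 0`. -/
lemma stmt5_aux_sign (A B C p q : ℝ) (hrec : A + p*B + q*C = 0) (hp : p < 0) (hq : 0 < q)
    (hAC : 0 < A*C) : |A| + p*|B| + q*|C| = 0 := by
  rcases lt_or_gt_of_ne (fun h : C = 0 => by simp [h] at hAC) with hC | hC
  · have hA : A < 0 := by nlinarith
    have hB : B < 0 := by nlinarith
    rw [abs_of_neg hA, abs_of_neg hB, abs_of_neg hC]; linarith
  · have hA : 0 < A := by nlinarith
    have hB : 0 < B := by nlinarith
    rw [abs_of_pos hA, abs_of_pos hB, abs_of_pos hC]; linarith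

/-- With `u_m = a·λ^m + conj(a·λ^m)` (all nonzero), `θ` the normalised
argument of `λ`, and a sequence `(r_n)` of positive integers with `{r_nθ} = ‖r_nθ‖ < 1/4`
and `‖r_nθ‖ → 0`, setting `w_{n,m} = |u_{m+2r_n}| + a_{r_n}|u_{m+r_n}| + b_{r_n}|u_m|`
and `Δ_n = {m : w_{n,m} ≠ 0}`, we have `min Δ_n → ∞`: for every `M` there is `N` such
that for all `n ≥ N` every `m ∈ Δ_n` satisfies `m > M`. -/
theorem stmt_5 (lam a : ℂ) (θ : ℝ)
    (ha0 : a ≠ 0) (h0 : 0 < ‖lam‖) (h1 : ‖lam‖ < 1)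
    (hθmem : θ ∈ Set.Ico (0 : ℝ) 1)
    (hθ : lam = (‖lam‖ : ℂ) * Complex.exp (2 * Real.pi * Complex.I * θ))
    (hreal : ∀ n : ℕ, 0 < n → lam ^ n ∉ Set.range ((↑) : ℝ → ℂ))
    (u : ℕ → ℝ) (hu : ∀ m, (u m : ℂ) = a * lam ^ m + starRingEnd ℂ (a * lam ^ m))
    (hune : ∀ m, u m ≠ 0)
    (r : ℕ → ℕ) (hrpos : ∀ n, 0 < r n)
    (hfract : ∀ n, Int.fract ((r n : ℝ) * θ) = |(r n : ℝ) * θ - round ((r n : ℝ) * θ)|)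
    (hsmall : ∀ n, |(r n : ℝ) * θ - round ((r n : ℝ) * θ)| < 1 / 4)
    (hto0 : Filter.Tendsto (fun n => |(r n : ℝ) * θ - round ((r n : ℝ) * θ)|)
      Filter.atTop (nhds 0))
    (ar br : ℕ → ℝ)
    (har : ∀ n, (ar n : ℂ) = -(lam ^ (r n) + starRingEnd ℂ (lam ^ (r n))))
    (hbr : ∀ n, br n = ‖lam‖ ^ (2 * r n))
    (w : ℕ → ℕ → ℝ)
    (hw : ∀ n m, w n m = |u (m + 2 * r n)| + ar n * |u (m + r n)| + br n * |u m|) :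
    ∀ M : ℕ, ∃ N : ℕ, ∀ n ≥ N, ∀ m : ℕ, w n m ≠ 0 → m > M := by
  set ρ : ℝ := ‖lam‖ with hρ
  set x : ℕ → ℝ := fun n => (r n : ℝ) * θ - round ((r n : ℝ) * θ) with hxdef
  set e : ℕ → ℂ := fun n => Complex.exp (2 * Real.pi * Complex.I * (x n : ℂ)) with hedef
  -- decomposition of lam ^ (r n)
  have hlamr : ∀ n, lam ^ (r n) = ((ρ ^ (r n) : ℝ) : ℂ) * e n := by
    intro n
    conv_lhs => rw [hθ]
    rw [mul_pow, ← Complex.exp_nat_mul]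
    have hx : (r n : ℝ) * θ = x n + (round ((r n : ℝ) * θ) : ℤ) := by
      simp [hxdef]
    have hc : ((r n : ℝ) * θ : ℂ) = (x n : ℂ) + ((round ((r n : ℝ) * θ) : ℤ) : ℂ) := by
      exact_mod_cast congrArg (fun t : ℝ => (t : ℂ)) hx
    have h2 : (r n : ℂ) * ((2 : ℂ) * Real.pi * Complex.I * θ)
        = 2 * Real.pi * Complex.I * (x n : ℂ)
          + ((round ((r n : ℝ) * θ) : ℤ) : ℂ) * (2 * Real.pi * Complex.I) := by
      push_cast at hc ⊢
      linear_combination (2 * (Real.pi : ℂ) * Complex.I) * hc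
    rw [h2, Complex.exp_add, Complex.exp_int_mul_two_pi_mul_I, mul_one]
    push_cast
    ring
  -- real part of e n
  have here : ∀ n, (e n).re = Real.cos (2 * Real.pi * x n) := by
    intro n
    have : (2 * Real.pi * Complex.I * (x n : ℂ)) = ((2 * Real.pi * x n : ℝ) : ℂ) * Complex.I := by
      push_cast; ring
    rw [hedef]; simp only []
    rw [this, Complex.exp_ofReal_mul_I_re]
  have hcospos : ∀ n, 0 < Real.cos (2 * Real.pi * x n) := by
    intro n
    apply Real.cos_pos_of_mem_Ioo
    have hx1 := (abs_lt.mp (hsmall n)).1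
    have hx2 := (abs_lt.mp (hsmall n)).2
    constructor
    · nlinarith [Real.pi_pos]
    · nlinarith [Real.pi_pos]
  have hgen : ∀ (c : ℝ) (z : ℂ), ((c : ℂ) * z).re = c * z.re := fun c z => by simp
  -- u via real parts
  have hure : ∀ m, u m = 2 * (a * lam ^ m).re := by
    intro m
    have h := hu m
    rw [Complex.add_conj] at h
    exact_mod_cast h
  -- ar is negative
  have harneg : ∀ n, ar n < 0 := by
    intro n
    have h := har n
    rw [Complex.add_conj] at h
    have h' : ar n = -(2 * (lam ^ (r n)).re) := by exact_mod_cast h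
    have hre : (lam ^ (r n)).re = ρ ^ (r n) * Real.cos (2 * Real.pi * x n) := by
      rw [hlamr n, hgen, here n]
    rw [h', hre]
    have : 0 < ρ ^ (r n) := pow_pos h0 _
    nlinarith [hcospos n]
  -- br is positive
  have hbrpos : ∀ n, 0 < br n := fun n => by rw [hbr]; exact pow_pos h0 _
  -- complex cast of br
  have hbrC : ∀ n, (br n : ℂ) = lam ^ (r n) * starRingEnd ℂ (lam ^ (r n)) := by
    intro n
    rw [hbr, pow_mul, Complex.sq_norm]
    push_cast
    rw [← Complex.mul_conj, map_pow]
    ring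
  -- the recurrence
  have hrec : ∀ n m, u (m + 2 * r n) + ar n * u (m + r n) + br n * u m = 0 := by
    intro n m
    have h : ((u (m + 2 * r n) + ar n * u (m + r n) + br n * u m : ℝ) : ℂ) = 0 := by
      push_cast
      rw [hu, hu, hu, har, hbrC]
      simp only [map_mul, map_pow, pow_add, pow_mul]
      ring
    exact_mod_cast h
  -- e n tends to 1
  have hx0 : Filter.Tendsto x Filter.atTop (nhds 0) := by
    rw [tendsto_zero_iff_abs_tendsto_zero]
    exact hto0
  have he1 : Filter.Tendsto e Filter.atTop (nhds 1) := by
    have hc : Filter.Tendsto (fun n => 2 * Real.pi * Complex.I * (x n : ℂ))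
        Filter.atTop (nhds 0) := by
      have : Filter.Tendsto (fun n => ((x n : ℝ) : ℂ)) Filter.atTop (nhds ((0 : ℝ) : ℂ)) :=
        (Complex.continuous_ofReal.tendsto _).comp hx0
      simpa using this.const_mul (2 * Real.pi * Complex.I)
    have := (Complex.continuous_exp.tendsto 0).comp hc
    rw [Complex.exp_zero] at this; exact this
  -- main argument
  intro M
  -- for each fixed m, eventually u m and u (m + 2 r n) have the same sign
  have hev : ∀ m : ℕ, ∀ᶠ n in Filter.atTop, 0 < u (m + 2 * r n) * u m := by
    intro m
    have hF : Filter.Tendsto (fun n => (a * lam ^ m * (e n) ^ 2).re * u m)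
        Filter.atTop (nhds ((u m) ^ 2 / 2)) := by
      have h1 : Filter.Tendsto (fun n => a * lam ^ m * (e n) ^ 2) Filter.atTop
          (nhds (a * lam ^ m * 1 ^ 2)) := ((he1.pow 2).const_mul _)
      have h2 := (Complex.continuous_re.tendsto _).comp h1
      have h3 : Filter.Tendsto (fun n => (a * lam ^ m * (e n) ^ 2).re) Filter.atTop
          (nhds ((a * lam ^ m).re)) := by simpa only [one_pow, mul_one, Function.comp_def] using h2
      have h4 := h3.mul_const (u m)
      have h5 : (a * lam ^ m).re * u m = (u m) ^ 2 / 2 := by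
        rw [hure m]; ring
      rwa [h5] at h4
    have hpos : (0 : ℝ) < (u m) ^ 2 / 2 := by
      have := hune m; positivity
    have := hF.eventually (eventually_gt_nhds hpos)
    filter_upwards [this] with n hn
    have hu2 : u (m + 2 * r n) = 2 * ρ ^ (2 * r n) * (a * lam ^ m * (e n) ^ 2).re := by
      rw [hure]
      have : a * lam ^ (m + 2 * r n) = ((ρ ^ (2 * r n) : ℝ) : ℂ) * (a * lam ^ m * (e n) ^ 2) := by
        rw [pow_add, pow_mul', hlamr n]
        push_cast
        rw [pow_mul]
        ring
      rw [this, hgen]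
      ring
    rw [hu2]
    have hρpos : (0 : ℝ) < ρ ^ (2 * r n) := pow_pos h0 _
    nlinarith [hn]
  -- combine over all m ≤ M
  have hall : ∀ᶠ n in Filter.atTop, ∀ m ∈ Finset.range (M + 1), 0 < u (m + 2 * r n) * u m :=
    (Finset.range (M + 1)).eventually_all.mpr (fun m _ => hev m)
  obtain ⟨N, hN⟩ := Filter.eventually_atTop.mp hall
  refine ⟨N, fun n hn m hwm => ?_⟩
  by_contra hle
  push_neg at hle
  apply hwm
  rw [hw]
  exact stmt5_aux_sign _ _ _ _ _ (hrec n m) (harneg n) (hbrpos n)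
    (hN n hn m (Finset.mem_range.mpr (Nat.lt_succ_of_le hle)))
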